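/- arXiv:2509.06614 — 2 statements merged into one kernel-verified Lean document; each statement's English description precedes it below -/
import Mathlib

section
/- For all k ≤ d, the verification fold of the canonical sibling-path proof for leaf i : Fin (2^d) with element ℓ i, computed for k steps, equals the Merkle root mroot k of the 2^k-block of leaves containing i, i.e., of the leaves with indices ⌊i/2^k⌋·2^k, ⌊i/2^k⌋·2^k + 1, …, ⌊i/2^k⌋·2^k + 2^k − 1. (The structural invariant behind the honest prover's strategy in the multi-step membership fraud-proof: every node on the path from leaf i to the root is the Merkle root of the block of leaves below it.) -/
variable {α β : Type*}

/-- First half of a family of `2^(d+1)` leaves. -/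
def half0 {d : ℕ} (ℓ : Fin (2 ^ (d + 1)) → α) : Fin (2 ^ d) → α :=
  fun i => ℓ ⟨i.val, by
    have hi := i.isLt
    have h2 : 2 ^ (d + 1) = 2 ^ d + 2 ^ d := by rw [pow_succ]; ring
    omega⟩

/-- Second half of a family of `2^(d+1)` leaves. -/
def half1 {d : ℕ} (ℓ : Fin (2 ^ (d + 1)) → α) : Fin (2 ^ d) → α :=
  fun i => ℓ ⟨2 ^ d + i.val, by
    have hi := i.isLt
    have h2 : 2 ^ (d + 1) = 2 ^ d + 2 ^ d := by rw [pow_succ]; ring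
    omega⟩

/-- Merkle root of a family of `2^d` leaves, with leaf hash `h` and node combiner `H`. -/
def mroot (h : α → β) (H : β → β → β) : (d : ℕ) → (Fin (2 ^ d) → α) → β
  | 0, ℓ => h (ℓ ⟨0, by positivity⟩)
  | d + 1, ℓ => H (mroot h H d (half0 ℓ)) (mroot h H d (half1 ℓ))

/-- Verification fold of a membership proof `π` (a vector of `d` hashes) for element `e`
at position `i`: `v 0 = h e`, and `v (k+1) = H (π k) (v k)` if the `k`-th bit of `i` is 1,
else `v (k+1) = H (v k) (π k)`. -/
def vfold (h : α → β) (H : β → β → β) (e : α) (i : ℕ) {d : ℕ} (π : Fin d → β) : ℕ → β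
  | 0 => h e
  | k + 1 =>
    if hk : k < d then
      if i.testBit k then H (π ⟨k, hk⟩) (vfold h H e i π k)
      else H (vfold h H e i π k) (π ⟨k, hk⟩)
    else vfold h H e i π k

/-- The membership proof `π` verifies element `e` at position `i` against root `r`. -/
def Verifies (h : α → β) (H : β → β → β) {d : ℕ} (π : Fin d → β) (e : α)
    (i : Fin (2 ^ d)) (r : β) : Prop :=
  vfold h H e i.val π d = r

/-- The `2^k`-block of leaves with block index `b`: leaves `b·2^k, …, b·2^k + 2^k - 1`. -/
def blockAt {d : ℕ} (ℓ : Fin (2 ^ d) → α) (k b : ℕ) (hb : (b + 1) * 2 ^ k ≤ 2 ^ d) :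
    Fin (2 ^ k) → α :=
  fun j => ℓ ⟨b * 2 ^ k + j.val, by
    have hj := j.isLt
    have h1 : (b + 1) * 2 ^ k = b * 2 ^ k + 2 ^ k := by ring
    omega⟩

/-- Index of the sibling block of block `b` (flip the lowest bit). -/
def sibIndex (b : ℕ) : ℕ := if b % 2 = 0 then b + 1 else b - 1

/-- Canonical sibling-path proof for position `i`: the `k`-th entry is the Merkle root of
the `2^k`-block of leaves that is the sibling, at height `k`, of the block containing `i`. -/
def sibPath (h : α → β) (H : β → β → β) {d : ℕ} (ℓ : Fin (2 ^ d) → α) (i : Fin (2 ^ d)) :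
    Fin d → β :=
  fun k => mroot h H k.val (blockAt ℓ k.val (sibIndex (i.val / 2 ^ k.val)) (by
    have hk := k.isLt
    have hi := i.isLt
    have hd : 2 ^ d = 2 ^ (d - k.val) * 2 ^ k.val := by rw [← pow_add]; congr 1; omega
    have hq : i.val / 2 ^ k.val < 2 ^ (d - k.val) :=
      Nat.div_lt_of_lt_mul (by rw [mul_comm, ← hd]; exact hi)
    have hpow : 2 ≤ 2 ^ (d - k.val) := by
      calc 2 = 2 ^ 1 := (pow_one 2).symm
      _ ≤ 2 ^ (d - k.val) := Nat.pow_le_pow_right (by norm_num) (by omega)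
    have heven : 2 ^ (d - k.val) % 2 = 0 := by
      have : 2 ^ (d - k.val) = 2 * 2 ^ (d - k.val - 1) := by
        rw [← pow_succ']; congr 1; omega
      omega
    have hs : sibIndex (i.val / 2 ^ k.val) < 2 ^ (d - k.val) := by
      unfold sibIndex
      split <;> omega
    calc (sibIndex (i.val / 2 ^ k.val) + 1) * 2 ^ k.val
        ≤ 2 ^ (d - k.val) * 2 ^ k.val := Nat.mul_le_mul_right _ (by omega)
      _ = 2 ^ d := hd.symm))



lemma blockAt_congr {d : ℕ} (ℓ : Fin (2 ^ d) → α) {k b b' : ℕ}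
    (hb : (b + 1) * 2 ^ k ≤ 2 ^ d) (hb' : (b' + 1) * 2 ^ k ≤ 2 ^ d) (e : b = b') :
    blockAt ℓ k b hb = blockAt ℓ k b' hb' := by subst e; rfl

lemma half0_blockAt {d : ℕ} (ℓ : Fin (2 ^ d) → α) {k b : ℕ}
    (hb : (b + 1) * 2 ^ (k + 1) ≤ 2 ^ d) (hb' : (2 * b + 1) * 2 ^ k ≤ 2 ^ d) :
    half0 (blockAt ℓ (k + 1) b hb) = blockAt ℓ k (2 * b) hb' := by
  funext j
  show ℓ _ = ℓ _
  congr 1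
  apply Fin.ext
  show b * 2 ^ (k + 1) + j.val = 2 * b * 2 ^ k + j.val
  rw [pow_succ]; ring

lemma half1_blockAt {d : ℕ} (ℓ : Fin (2 ^ d) → α) {k b : ℕ}
    (hb : (b + 1) * 2 ^ (k + 1) ≤ 2 ^ d) (hb' : (2 * b + 1 + 1) * 2 ^ k ≤ 2 ^ d) :
    half1 (blockAt ℓ (k + 1) b hb) = blockAt ℓ k (2 * b + 1) hb' := by
  funext j
  show ℓ _ = ℓ _
  congr 1
  apply Fin.ext
  show b * 2 ^ (k + 1) + (2 ^ k + j.val) = (2 * b + 1) * 2 ^ k + j.val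
  rw [pow_succ]; ring

/-- Structural invariant of the honest prover's strategy: for all `k ≤ d`, the
verification fold of the canonical sibling-path proof for leaf `i`, with element `ℓ i`,
computed for `k` steps equals the Merkle root of the `2^k`-block of leaves containing
`i`, i.e. the leaves with indices `⌊i/2^k⌋·2^k, …, ⌊i/2^k⌋·2^k + 2^k - 1`. -/
theorem vfold_sibPath_eq_block_root (h : α → β) (H : β → β → β)
    {d : ℕ} (ℓ : Fin (2 ^ d) → α) (i : Fin (2 ^ d)) (k : ℕ) (hk : k ≤ d) :
    vfold h H (ℓ i) i.val (sibPath h H ℓ i) k =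
      mroot h H k (blockAt ℓ k (i.val / 2 ^ k) (by
        have hi := i.isLt
        have hd : 2 ^ d = 2 ^ (d - k) * 2 ^ k := by rw [← pow_add]; congr 1; omega
        have hq : i.val / 2 ^ k < 2 ^ (d - k) :=
          Nat.div_lt_of_lt_mul (by rw [mul_comm, ← hd]; exact hi)
        calc (i.val / 2 ^ k + 1) * 2 ^ k ≤ 2 ^ (d - k) * 2 ^ k :=
              Nat.mul_le_mul_right _ (by omega)
          _ = 2 ^ d := hd.symm)) := by
  
  induction k with
  | zero =>
    show h (ℓ i) = h _
    congr 1
    apply congrArg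
    apply Fin.ext
    show i.val = i.val / 2 ^ 0 * 2 ^ 0 + 0
    simp
  | succ k ih =>
    have hk' : k ≤ d := by omega
    have hkd : k < d := by omega
    have hiblt : (i.val / 2 ^ (k + 1) + 1) * 2 ^ (k + 1) ≤ 2 ^ d := by
      have hi := i.isLt
      have hd : 2 ^ d = 2 ^ (d - (k+1)) * 2 ^ (k+1) := by rw [← pow_add]; congr 1; omega
      have hq : i.val / 2 ^ (k+1) < 2 ^ (d - (k+1)) :=
        Nat.div_lt_of_lt_mul (by rw [mul_comm, ← hd]; exact hi)
      calc (i.val / 2 ^ (k+1) + 1) * 2 ^ (k+1) ≤ 2 ^ (d - (k+1)) * 2 ^ (k+1) :=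
            Nat.mul_le_mul_right _ (by omega)
        _ = 2 ^ d := hd.symm
    have e1 : i.val / 2 ^ k / 2 = i.val / 2 ^ (k + 1) := by
      rw [Nat.div_div_eq_div_mul, pow_succ]
    have hbit : Nat.testBit i.val k = decide (i.val / 2 ^ k % 2 = 1) :=
      Nat.testBit_eq_decide_div_mod_eq
    have h1le : (2 * (i.val / 2 ^ (k + 1)) + 1 + 1) * 2 ^ k ≤ 2 ^ d := by
      have h2 : (2 * (i.val / 2 ^ (k + 1)) + 1 + 1) * 2 ^ k
          = (i.val / 2 ^ (k + 1) + 1) * 2 ^ (k + 1) := by rw [pow_succ]; ring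
      rw [h2]; exact hiblt
    have h0le : (2 * (i.val / 2 ^ (k + 1)) + 1) * 2 ^ k ≤ 2 ^ d :=
      le_trans (Nat.mul_le_mul_right _ (by omega)) h1le
    have hsle : (sibIndex (i.val / 2 ^ k) + 1) * 2 ^ k ≤ 2 ^ d :=
      le_trans (Nat.mul_le_mul_right _ (by unfold sibIndex; split <;> omega)) h1le
    have hmr : mroot h H (k + 1) (blockAt ℓ (k + 1) (i.val / 2 ^ (k + 1)) hiblt)
        = H (mroot h H k (blockAt ℓ k (2 * (i.val / 2 ^ (k + 1))) h0le))
            (mroot h H k (blockAt ℓ k (2 * (i.val / 2 ^ (k + 1)) + 1) h1le)) := by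
      show H (mroot h H k (half0 (blockAt ℓ (k + 1) (i.val / 2 ^ (k + 1)) hiblt)))
             (mroot h H k (half1 (blockAt ℓ (k + 1) (i.val / 2 ^ (k + 1)) hiblt))) = _
      rw [half0_blockAt ℓ hiblt h0le, half1_blockAt ℓ hiblt h1le]
    refine Eq.trans ?_ hmr.symm
    show (if hkk : k < d then
        if Nat.testBit i.val k then H (sibPath h H ℓ i ⟨k, hkk⟩) (vfold h H (ℓ i) i.val (sibPath h H ℓ i) k)
        else H (vfold h H (ℓ i) i.val (sibPath h H ℓ i) k) (sibPath h H ℓ i ⟨k, hkk⟩)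
      else vfold h H (ℓ i) i.val (sibPath h H ℓ i) k) = _
    rw [dif_pos hkd, ih hk', hbit]
    have hsib : sibPath h H ℓ i ⟨k, hkd⟩
        = mroot h H k (blockAt ℓ k (sibIndex (i.val / 2 ^ k)) hsle) := rfl
    rcases Nat.even_or_odd (i.val / 2 ^ k) with he | ho
    · have hq2 : i.val / 2 ^ k % 2 = 0 := Nat.even_iff.mp he
      rw [if_neg (by simp [hq2]), hsib]
      congr 1
      · exact congrArg _ (blockAt_congr ℓ _ _ (by omega))
      · exact congrArg _ (blockAt_congr ℓ _ _ (by unfold sibIndex; split <;> omega))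
    · have hq2 : i.val / 2 ^ k % 2 = 1 := Nat.odd_iff.mp ho
      rw [if_pos (by simp [hq2]), hsib]
      congr 1
      · exact congrArg _ (blockAt_congr ℓ _ _ (by unfold sibIndex; split <;> omega))
      · exact congrArg _ (blockAt_congr ℓ _ _ (by omega))
end

section
/- Assume the leaf-hash h : α → β is injective and the node combiner H : β → β → β is injective as a function on pairs. Let validTr : α → Prop, let ℓ : Fin (2^d) → α be a batch that is globally valid with respect to a history of previous batches ℓ₁, …, ℓₘ (with ℓₖ : Fin (2^{dₖ}) → α): every element of ℓ satisfies validTr, ℓ is injective, and no element of ℓ occurs in any history batch. Then no fraud evidence against ℓ with root mroot d ℓ exists: (1) every membership proof that verifies some element e at a position i against mroot d ℓ satisfies e = ℓ i, hence validTr e holds; (2) there is no element e, pair of distinct positions i ≠ j, and pair of proofs verifying e at both i and j against mroot d ℓ; and (3) there is no element e with verifying membership proofs both against mroot d ℓ and against mroot dₖ ℓₖ for some history batch ℓₖ. (The honest staker's side of Proposition 3: an honest agent staking on a legal batch tag wins every Validity, Integrity 1, and Integrity 2 fraud-proof initiated against it.) -/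
variable {α β : Type*}

lemma vfold_restrict (h : α → β) (H : β → β → β) (e : α) (i : ℕ) {d : ℕ}
    (π : Fin (d + 1) → β) : ∀ k, k ≤ d →
    vfold h H e (i % 2 ^ d) (fun j : Fin d => π j.castSucc) k = vfold h H e i π k := by
  intro k hk
  induction k with
  | zero => rfl
  | succ k ih =>
    have hkd : k < d := by omega
    have hbit : (i % 2 ^ d).testBit k = i.testBit k := by
      rw [Nat.testBit_mod_two_pow]; simp [hkd]
    simp only [vfold, hkd, hkd.trans (Nat.lt_succ_self d), dif_pos, hbit,
      ih (by omega)]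
    rfl

lemma verif_eq (h : α → β) (H : β → β → β)
    (hinj : Function.Injective h)
    (Hinj : Function.Injective fun p : β × β => H p.1 p.2) :
    ∀ (d : ℕ) (ℓ : Fin (2 ^ d) → α) (e : α) (i : Fin (2 ^ d)) (π : Fin d → β),
      Verifies h H π e i (mroot h H d ℓ) → e = ℓ i := by
  intro d
  induction d with
  | zero =>
    intro ℓ e i π hv
    have : h e = h (ℓ ⟨0, by positivity⟩) := hv
    have he := hinj this
    have : i = ⟨0, by positivity⟩ := by
      have := i.isLt; exact Fin.ext (by omega)
    rw [this]; exact he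
  | succ d ih =>
    intro ℓ e i π hv
    have hlt : d < d + 1 := Nat.lt_succ_self d
    have hi := i.isLt
    have h2 : 2 ^ (d + 1) = 2 ^ d + 2 ^ d := by rw [pow_succ]; ring
    have hbit : i.val.testBit d = decide (i.val / 2 ^ d % 2 = 1) :=
      Nat.testBit_eq_decide_div_mod_eq
    unfold Verifies at hv
    simp only [vfold, hlt, dif_pos] at hv
    by_cases hb : i.val.testBit d
    · -- second half
      have hge : 2 ^ d ≤ i.val := by
        by_contra hcon
        rw [Nat.testBit_eq_decide_div_mod_eq] at hb
        have : i.val / 2 ^ d = 0 := Nat.div_eq_of_lt (by omega)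
        simp [this] at hb
      rw [if_pos hb] at hv
      have hpair := Hinj (a₁ := (π ⟨d, hlt⟩, vfold h H e i.val π d))
        (a₂ := (mroot h H d (half0 ℓ), mroot h H d (half1 ℓ))) (by simpa [mroot] using hv)
      have hv2 : vfold h H e i.val π d = mroot h H d (half1 ℓ) :=
        congrArg Prod.snd hpair
      set i' : Fin (2 ^ d) := ⟨i.val - 2 ^ d, by omega⟩ with hi'
      have hmod : i.val % 2 ^ d = i'.val := by
        show i.val % 2 ^ d = i.val - 2 ^ d
        rw [Nat.mod_eq_sub_mod hge, Nat.mod_eq_of_lt (by omega)]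
      have hv3 : Verifies h H (fun j : Fin d => π j.castSucc) e i'
          (mroot h H d (half1 ℓ)) := by
        unfold Verifies
        rw [← hmod, vfold_restrict h H e i.val π d le_rfl, hv2]
      have := ih (half1 ℓ) e i' _ hv3
      rw [this]
      unfold half1
      congr 1
      exact Fin.ext (by simp only [hi']; omega)
    · have hltd : i.val < 2 ^ d := by
        by_contra hcon
        rw [Nat.testBit_eq_decide_div_mod_eq] at hb
        have : i.val / 2 ^ d = 1 :=
          Nat.div_eq_of_lt_le (by omega) (by omega)
        simp [this] at hb
      rw [if_neg hb] at hv
      have hpair := Hinj (a₁ := (vfold h H e i.val π d, π ⟨d, hlt⟩))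
        (a₂ := (mroot h H d (half0 ℓ), mroot h H d (half1 ℓ))) (by simpa [mroot] using hv)
      have hv2 : vfold h H e i.val π d = mroot h H d (half0 ℓ) :=
        congrArg Prod.fst hpair
      set i' : Fin (2 ^ d) := ⟨i.val, hltd⟩ with hi'
      have hmod : i.val % 2 ^ d = i'.val :=
        Nat.mod_eq_of_lt hltd
      have hv3 : Verifies h H (fun j : Fin d => π j.castSucc) e i'
          (mroot h H d (half0 ℓ)) := by
        unfold Verifies
        rw [← hmod, vfold_restrict h H e i.val π d le_rfl, hv2]
      have := ih (half0 ℓ) e i' _ hv3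
      rw [this]
      unfold half0
      congr 1

/-- Honest staker's side of Proposition 3: against a globally valid batch no fraud
evidence exists — every verifying membership proof identifies the (valid) batch element,
and there are no verified duplicates within the batch nor across the history. -/
theorem honest_staker_wins (h : α → β) (H : β → β → β)
    (hinj : Function.Injective h)
    (Hinj : Function.Injective fun p : β × β => H p.1 p.2)
    (validTr : α → Prop) {d : ℕ} (ℓ : Fin (2 ^ d) → α)
    (m : ℕ) (dk : Fin m → ℕ) (hist : (k : Fin m) → Fin (2 ^ dk k) → α)
    (hvalid : ∀ i, validTr (ℓ i)) (hinjℓ : Function.Injective ℓ)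
    (hfresh : ∀ (i : Fin (2 ^ d)) (k : Fin m) (j : Fin (2 ^ dk k)), ℓ i ≠ hist k j) :
    (∀ (e : α) (i : Fin (2 ^ d)) (π : Fin d → β),
        Verifies h H π e i (mroot h H d ℓ) → e = ℓ i ∧ validTr e) ∧
    (¬ ∃ (e : α) (i j : Fin (2 ^ d)) (π π' : Fin d → β), i ≠ j ∧
        Verifies h H π e i (mroot h H d ℓ) ∧
        Verifies h H π' e j (mroot h H d ℓ)) ∧
    (¬ ∃ (e : α) (k : Fin m) (i : Fin (2 ^ d)) (j : Fin (2 ^ dk k))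
        (π : Fin d → β) (π' : Fin (dk k) → β),
        Verifies h H π e i (mroot h H d ℓ) ∧
        Verifies h H π' e j (mroot h H (dk k) (hist k))) := by
  refine ⟨fun e i π hv => ?_, ?_, ?_⟩
  · have he := verif_eq h H hinj Hinj d ℓ e i π hv
    exact ⟨he, he ▸ hvalid i⟩
  · rintro ⟨e, i, j, π, π', hij, hv1, hv2⟩
    have h1 := verif_eq h H hinj Hinj d ℓ e i π hv1
    have h2 := verif_eq h H hinj Hinj d ℓ e j π' hv2
    exact hij (hinjℓ (h1 ▸ h2))
  · rintro ⟨e, k, i, j, π, π', hv1, hv2⟩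
    have h1 := verif_eq h H hinj Hinj d ℓ e i π hv1
    have h2 := verif_eq h H hinj Hinj (dk k) (hist k) e j π' hv2
    exact hfresh i k j (h1 ▸ h2)
end
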